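/- Tempered top-k strictly decreases entropy: for p : Fin n → ℝ strictly positive, strictly decreasing, with n ≥ 2, α ≥ 1, 1 ≤ K < n (and (α, K) ≠ (1, n)), the distribution p̂_i = p_i^α·[i<K]/∑_{j<K} p_j^α satisfies H(p̂) < H(p). -/

import Mathlib

open Finset Real

-- weighted Chebyshev sum inequality
lemma cheb {ι : Type*} (s : Finset ι) (μ a b : ι → ℝ)
    (hμ : ∀ i ∈ s, 0 ≤ μ i)
    (hmono : ∀ i ∈ s, ∀ j ∈ s, 0 ≤ (a i - a j) * (b i - b j)) :
    (∑ i ∈ s, μ i * a i) * (∑ i ∈ s, μ i * b i) ≤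
      (∑ i ∈ s, μ i) * (∑ i ∈ s, μ i * (a i * b i)) := by
  have key : 0 ≤ ∑ i ∈ s, ∑ j ∈ s, μ i * μ j * ((a i - a j) * (b i - b j)) := by
    apply Finset.sum_nonneg; intro i hi
    apply Finset.sum_nonneg; intro j hj
    exact mul_nonneg (mul_nonneg (hμ i hi) (hμ j hj)) (hmono i hi j hj)
  have expand : (∑ i ∈ s, ∑ j ∈ s, μ i * μ j * ((a i - a j) * (b i - b j))) =
      (∑ i ∈ s, μ i * (a i * b i)) * (∑ j ∈ s, μ j)
      + (∑ i ∈ s, μ i) * (∑ j ∈ s, μ j * (a j * b j))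
      - ((∑ i ∈ s, μ i * a i) * (∑ j ∈ s, μ j * b j)
        + (∑ i ∈ s, μ i * b i) * (∑ j ∈ s, μ j * a j)) := by
    rw [Finset.sum_mul_sum, Finset.sum_mul_sum, Finset.sum_mul_sum, Finset.sum_mul_sum,
        ← Finset.sum_add_distrib, ← Finset.sum_add_distrib, ← Finset.sum_sub_distrib]
    apply Finset.sum_congr rfl; intro i _
    rw [← Finset.sum_add_distrib, ← Finset.sum_add_distrib, ← Finset.sum_sub_distrib]
    apply Finset.sum_congr rfl; intro j _
    ring
  rw [expand] at key
  nlinarith [key]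

-- tempering does not increase entropy
lemma temper {ι : Type*} (s : Finset ι) (q : ι → ℝ) (α : ℝ)
    (hq : ∀ i ∈ s, 0 < q i) (hsumq : ∑ i ∈ s, q i = 1) (hα : 1 ≤ α) :
    -∑ i ∈ s, (q i ^ α / (∑ j ∈ s, q j ^ α)) * Real.log (q i ^ α / (∑ j ∈ s, q j ^ α))
      ≤ -∑ i ∈ s, q i * Real.log (q i) := by
  set S : ℝ := ∑ j ∈ s, q j ^ α with hS
  have hSpos : 0 < S := by
    apply Finset.sum_pos'
    · intro i hi; exact (Real.rpow_pos_of_pos (hq i hi) α).le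
    · rcases Finset.nonempty_of_sum_ne_zero (by rw [hsumq]; norm_num) with ⟨i, hi⟩
      exact ⟨i, hi, Real.rpow_pos_of_pos (hq i hi) α⟩
  set r : ι → ℝ := fun i => q i ^ α / S with hr
  have hrpos : ∀ i ∈ s, 0 < r i := fun i hi => div_pos (Real.rpow_pos_of_pos (hq i hi) α) hSpos
  have hsumr : ∑ i ∈ s, r i = 1 := by
    rw [hr]; rw [← Finset.sum_div]; field_simp; exact hS.symm
  -- Gibbs: ∑ r log r ≥ ∑ r log q
  have gibbs : ∑ i ∈ s, r i * Real.log (q i) ≤ ∑ i ∈ s, r i * Real.log (r i) := by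
    have h1 : ∀ i ∈ s, r i * Real.log (q i) - r i * Real.log (r i) ≤ q i - r i := by
      intro i hi
      have hlog : Real.log (q i / r i) ≤ q i / r i - 1 :=
        Real.log_le_sub_one_of_pos (div_pos (hq i hi) (hrpos i hi))
      rw [Real.log_div (ne_of_gt (hq i hi)) (ne_of_gt (hrpos i hi))] at hlog
      have := mul_le_mul_of_nonneg_left hlog (le_of_lt (hrpos i hi))
      have hne : r i ≠ 0 := ne_of_gt (hrpos i hi)
      rw [mul_sub, mul_sub, mul_div_cancel₀ _ hne, mul_one] at this
      linarith
    have h2 := Finset.sum_le_sum h1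
    rw [Finset.sum_sub_distrib, Finset.sum_sub_distrib, hsumq, hsumr] at h2
    linarith
  -- Chebyshev: ∑ q log q ≤ ∑ r log q
  have chebstep : ∑ i ∈ s, q i * Real.log (q i) ≤ ∑ i ∈ s, r i * Real.log (q i) := by
    have hqpow : ∀ i ∈ s, q i ^ α = q i * q i ^ (α - 1) := by
      intro i hi
      have hone : α = 1 + (α - 1) := by ring
      nth_rewrite 1 [hone]
      rw [Real.rpow_add (hq i hi), Real.rpow_one]
    have hc := cheb s q (fun i => q i ^ (α - 1)) (fun i => Real.log (q i))
      (fun i hi => (hq i hi).le) ?mono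
    case mono =>
      intro i hi j hj
      rcases le_total (q i) (q j) with h | h
      · have ha : q i ^ (α - 1) ≤ q j ^ (α - 1) :=
          Real.rpow_le_rpow (hq i hi).le h (by linarith)
        have hb : Real.log (q i) ≤ Real.log (q j) := Real.log_le_log (hq i hi) h
        nlinarith
      · have ha : q j ^ (α - 1) ≤ q i ^ (α - 1) :=
          Real.rpow_le_rpow (hq j hj).le h (by linarith)
        have hb : Real.log (q j) ≤ Real.log (q i) := Real.log_le_log (hq j hj) h
        nlinarith
    rw [hsumq, one_mul] at hc
    have e1 : ∑ i ∈ s, q i * q i ^ (α - 1) = S := by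
      rw [hS]; exact Finset.sum_congr rfl fun i hi => (hqpow i hi).symm
    have e2 : ∑ i ∈ s, q i * (q i ^ (α - 1) * Real.log (q i)) = ∑ i ∈ s, q i ^ α * Real.log (q i) := by
      apply Finset.sum_congr rfl; intro i hi; rw [hqpow i hi]; ring
    have hc' : (∑ i ∈ s, q i * q i ^ (α - 1)) * (∑ i ∈ s, q i * Real.log (q i)) ≤
        ∑ i ∈ s, q i * (q i ^ (α - 1) * Real.log (q i)) := hc
    rw [e1, e2] at hc'
    have hrlog : ∑ i ∈ s, r i * Real.log (q i) = (∑ i ∈ s, q i ^ α * Real.log (q i)) / S := by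
      rw [hr]
      simp only [div_mul_eq_mul_div]
      rw [← Finset.sum_div]
    rw [hrlog, le_div_iff₀ hSpos]
    linarith [hc']
  linarith

-- truncation strictly decreases entropy
lemma truncate {ι : Type*} [Fintype ι] [DecidableEq ι] (s : Finset ι) (p : ι → ℝ) (m : ℝ)
    (hpos : ∀ i, 0 < p i) (hsum : ∑ i, p i = 1)
    (hsne : s.Nonempty) (hcne : (Finset.univ \ s).Nonempty)
    (hm1 : ∀ i ∈ s, m ≤ p i) (hm2 : ∀ j ∈ Finset.univ \ s, p j < m) :
    -∑ i ∈ s, (p i / (∑ j ∈ s, p j)) * Real.log (p i / (∑ j ∈ s, p j))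
      < -∑ i, p i * Real.log (p i) := by
  set T : ℝ := ∑ j ∈ s, p j with hT
  have hTpos : 0 < T := Finset.sum_pos (fun i _ => hpos i) hsne
  set A : ℝ := ∑ i ∈ s, p i * Real.log (p i) with hA
  set B : ℝ := ∑ i ∈ Finset.univ \ s, p i * Real.log (p i) with hB
  have hsplit : B + A = ∑ i, p i * Real.log (p i) :=
    Finset.sum_sdiff (Finset.subset_univ s)
  have hTsplit : (∑ j ∈ Finset.univ \ s, p j) + T = 1 := by
    rw [hT, Finset.sum_sdiff (Finset.subset_univ s), hsum]
  have hcpos : 0 < ∑ j ∈ Finset.univ \ s, p j := Finset.sum_pos (fun i _ => hpos i) hcne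
  have hT1 : T < 1 := by linarith
  obtain ⟨j0, hj0⟩ := id hcne
  have hm0 : 0 < m := lt_trans (hpos j0) (hm2 j0 hj0)
  set L : ℝ := -Real.log m with hL
  -- main estimates
  have hAe : -A ≤ T * L := by
    have h1 : ∀ i ∈ s, -(p i * Real.log (p i)) ≤ p i * L := by
      intro i hi
      have : Real.log m ≤ Real.log (p i) := Real.log_le_log hm0 (hm1 i hi)
      nlinarith [hpos i]
    have h2 := Finset.sum_le_sum h1
    rw [Finset.sum_neg_distrib, ← Finset.sum_mul] at h2
    rw [← hA, ← hT] at h2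
    linarith [h2]
  have hBe : (1 - T) * L < -B := by
    have h1 : ∀ j ∈ Finset.univ \ s, p j * L < -(p j * Real.log (p j)) := by
      intro j hj
      have : Real.log (p j) < Real.log m := Real.log_lt_log (hpos j) (hm2 j hj)
      nlinarith [hpos j]
    have h2 := Finset.sum_lt_sum_of_nonempty hcne h1
    rw [Finset.sum_neg_distrib, ← Finset.sum_mul] at h2
    have : (∑ j ∈ Finset.univ \ s, p j) = 1 - T := by linarith
    rw [this] at h2
    rw [← hB] at h2
    linarith [h2]
  have hlogT : Real.log T < 0 := Real.log_neg hTpos hT1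
  -- rewrite the truncated entropy
  have hLHS : ∑ i ∈ s, (p i / T) * Real.log (p i / T) = A / T - Real.log T := by
    have h1 : ∀ i ∈ s, (p i / T) * Real.log (p i / T)
        = (p i * Real.log (p i)) / T - (p i / T) * Real.log T := by
      intro i hi
      rw [Real.log_div (hpos i).ne' hTpos.ne']
      ring
    rw [Finset.sum_congr rfl h1, Finset.sum_sub_distrib, ← Finset.sum_div,
        ← Finset.sum_mul, ← Finset.sum_div, ← hA, ← hT, div_self hTpos.ne', one_mul]
  rw [hLHS, ← hsplit]
  -- final arithmetic
  have key : -(A / T) + A ≤ (1 - T) * L := by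
    have h0 : (0:ℝ) ≤ (1 - T) / T := div_nonneg (by linarith) hTpos.le
    have h1 : (-A) * ((1 - T) / T) ≤ (T * L) * ((1 - T) / T) :=
      mul_le_mul_of_nonneg_right hAe h0
    have h2 : (-A) * ((1 - T) / T) = -(A / T) + A := by field_simp; ring
    have h3 : (T * L) * ((1 - T) / T) = (1 - T) * L := by field_simp
    linarith
  nlinarith [key, hBe, hlogT]

noncomputable def shannonEntropy {n : ℕ} (p : Fin n → ℝ) : ℝ :=
  -∑ i, p i * Real.log (p i)

/-- Tempered top-k sampling strictly decreases entropy. -/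
theorem entropy_tempered_topk_lt {n K : ℕ} (p : Fin n → ℝ) (α : ℝ)
    (hn : 2 ≤ n)
    (hpos : ∀ i, 0 < p i) (hsum : ∑ i, p i = 1)
    (hdec : ∀ i j : Fin n, i < j → p j < p i)
    (hα : 1 ≤ α) (hK1 : 1 ≤ K) (hKn : K < n)
    (hnontriv : ¬ (α = 1 ∧ K = n))
    (phat : Fin n → ℝ)
    (hphat : ∀ i : Fin n, phat i =
      (if (i : ℕ) < K then p i ^ α else 0) /
        ∑ j ∈ Finset.univ.filter (fun j : Fin n => (j : ℕ) < K), p j ^ α) :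
    shannonEntropy phat < shannonEntropy p := by
  set F : Finset (Fin n) := Finset.univ.filter (fun j : Fin n => (j : ℕ) < K) with hF
  have hmemF : ∀ i : Fin n, i ∈ F ↔ (i : ℕ) < K := by
    intro i; simp [hF]
  set T : ℝ := ∑ j ∈ F, p j with hT
  set S : ℝ := ∑ j ∈ F, p j ^ α with hS
  have hFne : F.Nonempty := ⟨⟨0, by omega⟩, (hmemF _).mpr (show 0 < K by omega)⟩
  have hFc : (Finset.univ \ F).Nonempty := by
    refine ⟨⟨K, hKn⟩, ?_⟩
    simp [Finset.mem_sdiff, hmemF]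
  have hTpos : 0 < T := Finset.sum_pos (fun i _ => hpos i) hFne
  have hSpos : 0 < S := Finset.sum_pos (fun i _ => Real.rpow_pos_of_pos (hpos i) α) hFne
  -- the bound m
  set k1 : Fin n := ⟨K - 1, by omega⟩ with hk1
  set m : ℝ := p k1 with hm
  have hm1 : ∀ i ∈ F, m ≤ p i := by
    intro i hi
    have hiK : (i : ℕ) < K := (hmemF i).mp hi
    rcases lt_or_eq_of_le (Nat.le_sub_one_of_lt hiK) with h | h
    · exact le_of_lt (hdec i k1 h)
    · have : i = k1 := Fin.ext h
      rw [this]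
  have hm2 : ∀ j ∈ Finset.univ \ F, p j < m := by
    intro j hj
    have hjK : ¬ (j : ℕ) < K := by
      intro hc
      exact (Finset.mem_sdiff.mp hj).2 ((hmemF j).mpr hc)
    exact hdec k1 j (by simp only [hk1, Fin.lt_def]; omega)
  -- truncation step
  have htrunc := truncate F p m hpos hsum hFne hFc hm1 hm2
  -- tempering step
  have hq' : ∀ i ∈ F, 0 < p i / T := fun i _ => div_pos (hpos i) hTpos
  have hsumq : ∑ i ∈ F, p i / T = 1 := by
    rw [← Finset.sum_div, div_self hTpos.ne']
  have htemp : -∑ i ∈ F, ((p i / T) ^ α / (∑ j ∈ F, (p j / T) ^ α))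
        * Real.log ((p i / T) ^ α / (∑ j ∈ F, (p j / T) ^ α))
      ≤ -∑ i ∈ F, (p i / T) * Real.log (p i / T) :=
    temper F (fun i => p i / T) α hq' hsumq hα
  -- identify phat restricted to F
  have hTpow : (0:ℝ) < T ^ α := Real.rpow_pos_of_pos hTpos α
  have hqpow : ∀ i : Fin n, (p i / T) ^ α = p i ^ α / T ^ α :=
    fun i => Real.div_rpow (hpos i).le hTpos.le α
  have hSq : ∑ j ∈ F, (p j / T) ^ α = S / T ^ α := by
    simp_rw [hqpow]; rw [← Finset.sum_div]
  have hid : ∀ i ∈ F, (p i / T) ^ α / (∑ j ∈ F, (p j / T) ^ α) = phat i := by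
    intro i hi
    rw [hphat i, if_pos ((hmemF i).mp hi), hqpow, hSq]
    field_simp
  -- rewrite shannonEntropy phat as sum over F
  have hEphat : shannonEntropy phat
      = -∑ i ∈ F, ((p i / T) ^ α / (∑ j ∈ F, (p j / T) ^ α))
          * Real.log ((p i / T) ^ α / (∑ j ∈ F, (p j / T) ^ α)) := by
    rw [shannonEntropy, neg_inj]
    rw [← Finset.sum_filter_add_sum_filter_not Finset.univ (fun i : Fin n => (i : ℕ) < K)]
    have hz : ∑ i ∈ Finset.univ.filter (fun i : Fin n => ¬ (i : ℕ) < K),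
        phat i * Real.log (phat i) = 0 := by
      apply Finset.sum_eq_zero
      intro i hi
      have : ¬ (i : ℕ) < K := (Finset.mem_filter.mp hi).2
      rw [hphat i, if_neg this, zero_div, zero_mul]
    rw [hz, add_zero, ← hF]
    apply Finset.sum_congr rfl
    intro i hi
    rw [hid i hi]
  rw [hEphat]
  calc -∑ i ∈ F, ((p i / T) ^ α / (∑ j ∈ F, (p j / T) ^ α))
          * Real.log ((p i / T) ^ α / (∑ j ∈ F, (p j / T) ^ α))
      ≤ -∑ i ∈ F, (p i / T) * Real.log (p i / T) := htemp
    _ < shannonEntropy p := htrunc
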